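/- Let (X, F, μ) be a σ-finite measure space, A ∈ F with 0 < μ(A^c) < ∞, let p_0, p_1 be probability densities with 0 < P_0(A) < 1 and 0 < P_1(A) < 1 (P_j(A) = ∫_A p_j dμ, P_j(A^c) = 1 − P_j(A)), let n ≥ 1 and α ∈ (0,1). Define the censored log-likelihood ratio statistic T(x_1,…,x_n) = Σ_{k=1}^n [1_A(x_k)·log(p_1(x_k)/p_0(x_k)) + 1_{A^c}(x_k)·log(P_1(A^c)/P_0(A^c))], and let φ_cen : X^n → [0,1] be a test of the form φ_cen = 1 on {T > c}, γ on {T = c}, 0 on {T < c}, for some c ∈ ℝ and γ ∈ [0,1], whose size equals α under every null density: ∫_{X^n} φ_cen·∏_{k=1}^n p(x_k) dμ^{⊗n} = α for all densities p with p·1_A = p_0·1_A μ-a.e. Define the minimal power ρ(φ) = inf over densities q with q·1_A = p_1·1_A μ-a.e. of ∫_{X^n} φ·∏_{k=1}^n q(x_k) dμ^{⊗n}. Then for every measurable test φ : X^n → [0,1] of level α (i.e. ∫_{X^n} φ·∏_k p(x_k) dμ^{⊗n} ≤ α for all densities p with p·1_A = p_0·1_A μ-a.e.), one has ρ(φ_cen)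 ≥ ρ(φ); i.e. φ_cen is a minimax test. -/

import Mathlib

open MeasureTheory
open scoped Classical ENNReal
open scoped NNReal

noncomputable section

/-- A probability density with respect to `μ`. -/
def IsDensity {X : Type*} [MeasurableSpace X] (μ : Measure X) (p : X → ℝ) : Prop :=
  Measurable p ∧ (∀ x, 0 ≤ p x) ∧ ∫ x, p x ∂μ = 1

/-- The censored log-likelihood ratio statistic
`T(x₁,…,xₙ) = Σ_k [1_A(x_k)·log(p₁(x_k)/p₀(x_k)) + 1_{Aᶜ}(x_k)·log(P₁(Aᶜ)/P₀(Aᶜ))]`,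
with values in the extended reals (ratios computed in `ℝ≥0∞`). -/
def censoredLLR {X : Type*} [MeasurableSpace X] (μ : Measure X) (A : Set X)
    (p₀ p₁ : X → ℝ) {n : ℕ} (x : Fin n → X) : EReal :=
  ∑ k : Fin n,
    (if x k ∈ A then ENNReal.log (ENNReal.ofReal (p₁ (x k)) / ENNReal.ofReal (p₀ (x k)))
     else ENNReal.log (ENNReal.ofReal (1 - ∫ z in A, p₁ z ∂μ)
        / ENNReal.ofReal (1 - ∫ z in A, p₀ z ∂μ)))

/-- The minimal power of a test `φ` over the composite alternative
`{q : q·1_A = p₁·1_A μ-a.e.}`. -/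
def minimalPower {X : Type*} [MeasurableSpace X] (μ : Measure X) (A : Set X)
    (p₁ : X → ℝ) (n : ℕ) (φ : (Fin n → X) → ℝ) : ℝ :=
  ⨅ q : {q : X → ℝ // IsDensity μ q ∧ ∀ᵐ x ∂μ, x ∈ A → q x = p₁ x},
    ∫ x, φ x * ∏ k, (q : X → ℝ) (x k) ∂(Measure.pi fun _ : Fin n => μ)

/-! ### Auxiliary lemmas -/

lemma myLogProd {ι : Type*} (s : Finset ι) (f : ι → ℝ≥0∞) :
    ENNReal.log (∏ i ∈ s, f i) = ∑ i ∈ s, ENNReal.log (f i) := by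
  induction s using Finset.cons_induction with
  | empty => simp
  | cons a s ha ih => rw [Finset.prod_cons, Finset.sum_cons, ENNReal.log_mul_add, ih]

lemma myDivMulDiv (a b c d : ℝ≥0∞) (hb : b ≠ ⊤) (hd : d ≠ ⊤) :
    a / b * (c / d) = a * c / (b * d) := by
  rw [div_eq_mul_inv, div_eq_mul_inv, div_eq_mul_inv, ENNReal.mul_inv (Or.inr hd) (Or.inl hb)]
  ring

lemma myProdDiv {ι : Type*} (s : Finset ι) (u v : ι → ℝ≥0∞) (hv : ∀ i, v i ≠ ⊤) :
    ∏ i ∈ s, (u i / v i) = (∏ i ∈ s, u i) / ∏ i ∈ s, v i := by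
  induction s using Finset.cons_induction with
  | empty => simp
  | cons a s ha ih =>
      rw [Finset.prod_cons, Finset.prod_cons, Finset.prod_cons, ih,
        myDivMulDiv _ _ _ _ (hv a) (ENNReal.prod_lt_top (fun i _ => (hv i).lt_top)).ne]

lemma myDivDivDiv (x y z : ℝ≥0∞) (hz0 : z ≠ 0) (hzt : z ≠ ⊤) :
    x / z / (y / z) = x / y := by
  rw [div_eq_mul_inv x z, div_eq_mul_inv y z, div_eq_mul_inv, div_eq_mul_inv,
    ENNReal.mul_inv (Or.inr (ENNReal.inv_ne_top.2 hz0)) (Or.inr (ENNReal.inv_ne_zero.2 hzt)),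
    inv_inv]
  calc x * z⁻¹ * (y⁻¹ * z) = x * y⁻¹ * (z⁻¹ * z) := by ring
  _ = x * y⁻¹ := by rw [ENNReal.inv_mul_cancel hz0 hzt, mul_one]

lemma myLintegralPiProd {X : Type*} [MeasurableSpace X] (μ : Measure X) [SigmaFinite μ] :
    ∀ {n : ℕ} (f : Fin n → X → ℝ≥0∞), (∀ i, Measurable (f i)) →
      ∫⁻ x, ∏ i, f i (x i) ∂(Measure.pi fun _ : Fin n => μ) = ∏ i, ∫⁻ y, f i y ∂μ := by
  intro n
  induction n with
  | zero =>
      intro f hf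
      simp [lintegral_const, Measure.pi_univ]
  | succ n ih =>
      intro f hf
      have hmp := (measurePreserving_piFinSuccAbove (fun _ : Fin (n+1) => μ) 0).symm
      have hF : Measurable fun x : Fin (n+1) → X => ∏ i, f i (x i) :=
        Finset.measurable_prod _ fun i _ => (hf i).comp (measurable_pi_apply i)
      rw [← hmp.lintegral_comp hF]
      simp_rw [MeasurableEquiv.piFinSuccAbove_symm_apply, Fin.insertNthEquiv, Equiv.coe_fn_mk,
        Fin.insertNth_zero, Fin.prod_univ_succ, Fin.cons_zero, Fin.cons_succ, cast_eq]
      rw [lintegral_prod_mul (f := fun y => f 0 y)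
        (g := fun v : Fin n → X => ∏ i : Fin n, f i.succ (v i)) (hf 0).aemeasurable
        (Finset.measurable_prod Finset.univ
          (fun (i : Fin n) _ => (hf i.succ).comp (measurable_pi_apply i))).aemeasurable,
        ih (fun i => f i.succ) (fun i => hf i.succ)]

lemma myPiWithDensity {X : Type*} [MeasurableSpace X] (μ : Measure X) [SigmaFinite μ] {n : ℕ}
    (f : X → ℝ≥0∞) (hf : Measurable f) (h1 : ∫⁻ y, f y ∂μ = 1) :
    Measure.pi (fun _ : Fin n => μ.withDensity f)
      = (Measure.pi fun _ : Fin n => μ).withDensity (fun x => ∏ k, f (x k)) := by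
  haveI : IsProbabilityMeasure (μ.withDensity f) :=
    ⟨by rw [withDensity_apply _ MeasurableSet.univ, Measure.restrict_univ, h1]⟩
  refine Measure.pi_eq fun s hs => ?_
  rw [withDensity_apply _ (MeasurableSet.univ_pi hs),
    ← lintegral_indicator (MeasurableSet.univ_pi hs)]
  have hind : ∀ x : Fin n → X, (Set.pi Set.univ s).indicator (fun x => ∏ k, f (x k)) x
      = ∏ k, (s k).indicator f (x k) := by
    intro x
    by_cases hx : x ∈ Set.pi Set.univ s
    · rw [Set.indicator_of_mem hx]
      exact Finset.prod_congr rfl fun k _ =>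
        (Set.indicator_of_mem (hx k (Set.mem_univ k)) f).symm
    · rw [Set.indicator_of_notMem hx]
      rw [Set.mem_univ_pi] at hx
      push_neg at hx
      obtain ⟨k, hk⟩ := hx
      exact (Finset.prod_eq_zero (Finset.mem_univ k) (Set.indicator_of_notMem hk f)).symm
  simp_rw [hind]
  rw [myLintegralPiProd μ _ (fun i => hf.indicator (hs i))]
  exact Finset.prod_congr rfl fun k _ => by
    rw [lintegral_indicator (hs k), withDensity_apply _ (hs k)]

lemma myPowerEq {X : Type*} [MeasurableSpace X] (μ : Measure X) [SigmaFinite μ] {n : ℕ}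
    (q : X → ℝ) (hqm : Measurable q) (hq0 : ∀ y, 0 ≤ q y) (hq1 : ∫ y, q y ∂μ = 1)
    (ψ : (Fin n → X) → ℝ) :
    ∫ x, ψ x * ∏ k, q (x k) ∂(Measure.pi fun _ : Fin n => μ)
      = ∫ x, ψ x ∂(Measure.pi fun _ : Fin n => μ.withDensity fun y => ENNReal.ofReal (q y)) := by
  have hqint : Integrable q μ := by
    by_contra h
    rw [integral_undef h] at hq1; exact one_ne_zero hq1.symm
  have h1 : ∫⁻ y, ENNReal.ofReal (q y) ∂μ = 1 := by
    rw [← ofReal_integral_eq_lintegral_ofReal hqint (Filter.Eventually.of_forall hq0), hq1,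
      ENNReal.ofReal_one]
  rw [myPiWithDensity μ _ hqm.ennreal_ofReal h1]
  have hD : (fun x : Fin n → X => ∏ k, ENNReal.ofReal (q (x k)))
      = fun x : Fin n → X => ((∏ k, (q (x k)).toNNReal : ℝ≥0) : ℝ≥0∞) := by
    funext x; rw [ENNReal.coe_finset_prod]; rfl
  rw [hD, integral_withDensity_eq_integral_smul
    (f := fun x : Fin n → X => ∏ k, (q (x k)).toNNReal)
    (Finset.measurable_prod _ fun k _ => hqm.real_toNNReal.comp (measurable_pi_apply k)) ψ]
  refine integral_congr_ae (Filter.Eventually.of_forall fun x => ?_)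
  show ψ x * ∏ k, q (x k) = (∏ k, (q (x k)).toNNReal : ℝ≥0) • ψ x
  rw [NNReal.smul_def, NNReal.coe_prod, mul_comm]
  exact congrArg (· * ψ x) (Finset.prod_congr rfl fun k _ => (Real.coe_toNNReal _ (hq0 _)).symm)

/-- The canonical extension of a partial density: keep `p` on `A`, uniform on `Aᶜ`. -/
def starDensity {X : Type*} [MeasurableSpace X] (μ : Measure X) (A : Set X) (p : X → ℝ) :
    X → ℝ :=
  fun y => if y ∈ A then p y else (1 - ∫ z in A, p z ∂μ) / (μ Aᶜ).toReal

lemma myDensityIntegrable {X : Type*} [MeasurableSpace X] {μ : Measure X} {p : X → ℝ}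
    (hp : IsDensity μ p) : Integrable p μ := by
  by_contra h
  have := hp.2.2
  rw [integral_undef h] at this
  exact one_ne_zero this.symm

lemma starDensity_isDensity {X : Type*} [MeasurableSpace X] {μ : Measure X} {A : Set X}
    (hA : MeasurableSet A) (hAc0 : 0 < μ Aᶜ) (hAcfin : μ Aᶜ < ⊤)
    {p : X → ℝ} (hp : IsDensity μ p) (hPA : (∫ z in A, p z ∂μ) ∈ Set.Ioo (0 : ℝ) 1) :
    IsDensity μ (starDensity μ A p) := by
  have hm : 0 < (μ Aᶜ).toReal := ENNReal.toReal_pos hAc0.ne' hAcfin.ne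
  have hpint : Integrable p μ := myDensityIntegrable hp
  set cst : ℝ := (1 - ∫ z in A, p z ∂μ) / (μ Aᶜ).toReal with hcst
  have hcst0 : 0 ≤ cst := div_nonneg (by linarith [hPA.2]) hm.le
  refine ⟨Measurable.ite hA hp.1 measurable_const, fun y => ?_, ?_⟩
  · by_cases hy : y ∈ A
    · simpa [starDensity, hy] using hp.2.1 y
    · simpa [starDensity, hy] using hcst0
  · have heq : starDensity μ A p =
        fun y => A.indicator p y + Aᶜ.indicator (fun _ => cst) y := by
      funext y
      by_cases hy : y ∈ A <;>
        simp [starDensity, hy, Set.indicator_of_mem, Set.indicator_of_notMem, hcst]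
    have h1 : Integrable (A.indicator p) μ := hpint.indicator hA
    have h2 : Integrable (Aᶜ.indicator fun _ => cst) μ :=
      (integrable_indicator_iff hA.compl).2
        ((integrableOn_const_iff (C := cst)).2 (Or.inr hAcfin))
    rw [heq, integral_add h1 h2, integral_indicator hA, integral_indicator hA.compl,
      setIntegral_const]
    rw [smul_eq_mul, hcst, measureReal_def, mul_div_cancel₀ _ hm.ne']
    ring

lemma starDensity_on {X : Type*} [MeasurableSpace X] (μ : Measure X) (A : Set X) (p : X → ℝ)
    {y : X} (hy : y ∈ A) : starDensity μ A p y = p y := if_pos hy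

/-- The per-coordinate likelihood-ratio function in `ℝ≥0∞`. -/
def rFun {X : Type*} [MeasurableSpace X] (μ : Measure X) (A : Set X) (p₀ p₁ : X → ℝ) :
    X → ℝ≥0∞ :=
  fun y => if y ∈ A then ENNReal.ofReal (p₁ y) / ENNReal.ofReal (p₀ y)
    else ENNReal.ofReal (1 - ∫ z in A, p₁ z ∂μ) / ENNReal.ofReal (1 - ∫ z in A, p₀ z ∂μ)

lemma rFun_measurable {X : Type*} [MeasurableSpace X] {μ : Measure X} {A : Set X}
    (hA : MeasurableSet A) {p₀ p₁ : X → ℝ} (h₀ : Measurable p₀) (h₁ : Measurable p₁) :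
    Measurable (rFun μ A p₀ p₁) :=
  Measurable.ite hA (h₁.ennreal_ofReal.div h₀.ennreal_ofReal) measurable_const

lemma censoredLLR_eq {X : Type*} [MeasurableSpace X] (μ : Measure X) (A : Set X)
    (p₀ p₁ : X → ℝ) {n : ℕ} (x : Fin n → X) :
    censoredLLR μ A p₀ p₁ x = ENNReal.log (∏ k, rFun μ A p₀ p₁ (x k)) := by
  rw [myLogProd]
  refine Finset.sum_congr rfl fun k _ => ?_
  simp only [censoredLLR, rFun]
  rw [apply_ite ENNReal.log]

lemma rFun_eq_star {X : Type*} [MeasurableSpace X] {μ : Measure X} {A : Set X}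
    (hm : 0 < (μ Aᶜ).toReal) (p₀ p₁ : X → ℝ) (y : X) :
    rFun μ A p₀ p₁ y
      = ENNReal.ofReal (starDensity μ A p₁ y) / ENNReal.ofReal (starDensity μ A p₀ y) := by
  by_cases hy : y ∈ A
  · simp [rFun, starDensity, hy]
  · simp only [rFun, starDensity, if_neg hy]
    rw [ENNReal.ofReal_div_of_pos hm, ENNReal.ofReal_div_of_pos hm,
      myDivDivDiv _ _ _ (ENNReal.ofReal_pos.2 hm).ne' ENNReal.ofReal_ne_top]

lemma myTail {X : Type*} [MeasurableSpace X] {μ : Measure X} {A : Set X}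
    (hA : MeasurableSet A) {p₁ q : X → ℝ} (hq : IsDensity μ q)
    (hae : ∀ᵐ x ∂μ, x ∈ A → q x = p₁ x) :
    ∫⁻ y in Aᶜ, ENNReal.ofReal (q y) ∂μ = ENNReal.ofReal (1 - ∫ z in A, p₁ z ∂μ) := by
  have hqint : Integrable q μ := myDensityIntegrable hq
  have h1 : ∫⁻ y in Aᶜ, ENNReal.ofReal (q y) ∂μ = ENNReal.ofReal (∫ y in Aᶜ, q y ∂μ) :=
    (ofReal_integral_eq_lintegral_ofReal hqint.integrableOn
      (Filter.Eventually.of_forall fun y => hq.2.1 y)).symm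
  have h2 : ∫ y in A, q y ∂μ = ∫ z in A, p₁ z ∂μ :=
    setIntegral_congr_ae hA (hae.mono fun x hx hxA => hx hxA)
  have h3 : ∫ y in A, q y ∂μ + ∫ y in Aᶜ, q y ∂μ = 1 := by
    rw [integral_add_compl hA hqint]; exact hq.2.2
  rw [h1]; congr 1; linarith

lemma myMapInv {X : Type*} [MeasurableSpace X] {μ : Measure X} {A : Set X}
    (hA : MeasurableSet A) {r : X → ℝ≥0∞} (hr : Measurable r) {cst : ℝ≥0∞}
    (hrc : ∀ y, y ∉ A → r y = cst) {q q' : X → ℝ}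
    (haeA : ∀ᵐ y ∂μ, y ∈ A → ENNReal.ofReal (q y) = ENNReal.ofReal (q' y))
    (htail : ∫⁻ y in Aᶜ, ENNReal.ofReal (q y) ∂μ = ∫⁻ y in Aᶜ, ENNReal.ofReal (q' y) ∂μ) :
    Measure.map r (μ.withDensity fun y => ENNReal.ofReal (q y))
      = Measure.map r (μ.withDensity fun y => ENNReal.ofReal (q' y)) := by
  have key : ∀ (g : X → ℝ) (B : Set ℝ≥0∞), MeasurableSet B →
      (μ.withDensity fun y => ENNReal.ofReal (g y)) (r ⁻¹' B)
        = ∫⁻ y in r ⁻¹' B ∩ A, ENNReal.ofReal (g y) ∂μ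
          + (if cst ∈ B then ∫⁻ y in Aᶜ, ENNReal.ofReal (g y) ∂μ else 0) := by
    intro g B hB
    have hS : MeasurableSet (r ⁻¹' B) := hr hB
    rw [withDensity_apply _ hS]
    have hsplit : r ⁻¹' B = (r ⁻¹' B ∩ A) ∪ (r ⁻¹' B ∩ Aᶜ) := by
      rw [← Set.inter_union_distrib_left, Set.union_compl_self, Set.inter_univ]
    calc ∫⁻ y in r ⁻¹' B, ENNReal.ofReal (g y) ∂μ
        = ∫⁻ y in (r ⁻¹' B ∩ A) ∪ (r ⁻¹' B ∩ Aᶜ), ENNReal.ofReal (g y) ∂μ := by rw [← hsplit]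
      _ = ∫⁻ y in r ⁻¹' B ∩ A, ENNReal.ofReal (g y) ∂μ
            + ∫⁻ y in r ⁻¹' B ∩ Aᶜ, ENNReal.ofReal (g y) ∂μ :=
          lintegral_union (hS.inter hA.compl)
            (disjoint_compl_right.mono Set.inter_subset_right Set.inter_subset_right)
      _ = _ := ?_
    congr 1
    by_cases hc : cst ∈ B
    · rw [if_pos hc]
      have hAc : r ⁻¹' B ∩ Aᶜ = Aᶜ := by
        ext y
        exact ⟨fun h => h.2, fun hy => ⟨by simp only [Set.mem_preimage, hrc y hy]; exact hc, hy⟩⟩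
      rw [hAc]
    · rw [if_neg hc]
      have hempty : r ⁻¹' B ∩ Aᶜ = ∅ := by
        ext y
        simp only [Set.mem_inter_iff, Set.mem_empty_iff_false, iff_false, not_and]
        intro hyB hyc
        exact hc (by rwa [← hrc y hyc])
      rw [hempty]
      simp
  refine Measure.ext fun B hB => ?_
  rw [Measure.map_apply hr hB, Measure.map_apply hr hB, key q B hB, key q' B hB, htail]
  congr 1
  exact lintegral_congr_ae ((ae_restrict_iff' ((hr hB).inter hA)).2
    (haeA.mono fun y hy hyS => hy hyS.2))

/-- The threshold test as a function of the product likelihood ratio. -/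
def GFun (c γ : ℝ) : ℝ≥0∞ → ℝ := fun u =>
  if (c : EReal) < ENNReal.log u then 1 else if ENNReal.log u = (c : EReal) then γ else 0

lemma GFun_measurable (c γ : ℝ) : Measurable (GFun c γ) := by
  refine Measurable.ite (ENNReal.measurable_log measurableSet_Ioi) measurable_const ?_
  exact Measurable.ite (ENNReal.measurable_log (measurableSet_singleton _)) measurable_const
    measurable_const

/-- The test based on thresholding the censored log-likelihood ratio
statistic, with size exactly `α` under every null density, is a minimax test: it maximizes
the minimal power over the composite alternative among all level-`α` tests. -/
theorem censored_LLR_test_minimax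
    {X : Type*} [MeasurableSpace X] (μ : Measure X) [SigmaFinite μ]
    (A : Set X) (hA : MeasurableSet A) (hAc0 : 0 < μ Aᶜ) (hAcfin : μ Aᶜ < ⊤)
    (p₀ p₁ : X → ℝ) (hp₀ : IsDensity μ p₀) (hp₁ : IsDensity μ p₁)
    (hP₀A : (∫ z in A, p₀ z ∂μ) ∈ Set.Ioo (0 : ℝ) 1)
    (hP₁A : (∫ z in A, p₁ z ∂μ) ∈ Set.Ioo (0 : ℝ) 1)
    (n : ℕ) (hn : 1 ≤ n)
    (α : ℝ) (hα : α ∈ Set.Ioo (0 : ℝ) 1)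
    (c : ℝ) (γ : ℝ) (hγ : γ ∈ Set.Icc (0 : ℝ) 1)
    (φcen : (Fin n → X) → ℝ)
    -- `φ_cen` is the threshold test at `c` with randomization `γ`:
    (hform : ∀ x, φcen x =
      if (c : EReal) < censoredLLR μ A p₀ p₁ x then 1
      else if censoredLLR μ A p₀ p₁ x = (c : EReal) then γ else 0)
    -- `φ_cen` has size exactly `α` under every null density:
    (hsize : ∀ p : X → ℝ, IsDensity μ p → (∀ᵐ x ∂μ, x ∈ A → p x = p₀ x) →
      ∫ x, φcen x * ∏ k, p (x k) ∂(Measure.pi fun _ : Fin n => μ) = α) :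
    -- minimax optimality:
    ∀ φ : (Fin n → X) → ℝ, Measurable φ → (∀ x, φ x ∈ Set.Icc (0 : ℝ) 1) →
      (∀ p : X → ℝ, IsDensity μ p → (∀ᵐ x ∂μ, x ∈ A → p x = p₀ x) →
        ∫ x, φ x * ∏ k, p (x k) ∂(Measure.pi fun _ : Fin n => μ) ≤ α) →
      minimalPower μ A p₁ n φ ≤ minimalPower μ A p₁ n φcen := by
  intro φ hφm hφ01 hφlevel
  have hm : 0 < (μ Aᶜ).toReal := ENNReal.toReal_pos hAc0.ne' hAcfin.ne
  have hpsD : IsDensity μ (starDensity μ A p₀) := starDensity_isDensity hA hAc0 hAcfin hp₀ hP₀A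
  have hqsD : IsDensity μ (starDensity μ A p₁) := starDensity_isDensity hA hAc0 hAcfin hp₁ hP₁A
  have hpsae : ∀ᵐ x ∂μ, x ∈ A → starDensity μ A p₀ x = p₀ x :=
    Filter.Eventually.of_forall fun x hx => starDensity_on μ A p₀ hx
  have hqsae : ∀ᵐ x ∂μ, x ∈ A → starDensity μ A p₁ x = p₁ x :=
    Filter.Eventually.of_forall fun x hx => starDensity_on μ A p₁ hx
  -- the test as a function of the product likelihood ratio
  have hGval : ∀ x : Fin n → X, φcen x = GFun c γ (∏ k, rFun μ A p₀ p₁ (x k)) := by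
    intro x; rw [hform x, censoredLLR_eq]; rfl
  have hrm : Measurable (rFun μ A p₀ p₁) := rFun_measurable hA hp₀.1 hp₁.1
  have hGprodm : Measurable fun u : Fin n → ℝ≥0∞ => GFun c γ (∏ k, u k) :=
    (GFun_measurable c γ).comp (Finset.measurable_prod _ fun k _ => measurable_pi_apply k)
  have hφcenm : Measurable φcen := by
    rw [show φcen = fun x => GFun c γ (∏ k, rFun μ A p₀ p₁ (x k)) from funext hGval]
    exact (GFun_measurable c γ).comp
      (Finset.measurable_prod _ fun k _ => hrm.comp (measurable_pi_apply k))
  have hφcen01 : ∀ x, 0 ≤ φcen x ∧ φcen x ≤ 1 := by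
    intro x; rw [hform x]
    split_ifs
    · exact ⟨zero_le_one, le_refl 1⟩
    · exact ⟨hγ.1, hγ.2⟩
    · exact ⟨le_refl 0, zero_le_one⟩
  -- likelihood ratio as a ratio of products
  have hRQP : ∀ x : Fin n → X, ∏ k, rFun μ A p₀ p₁ (x k)
      = ENNReal.ofReal (∏ k, starDensity μ A p₁ (x k))
        / ENNReal.ofReal (∏ k, starDensity μ A p₀ (x k)) := by
    intro x
    rw [Finset.prod_congr rfl fun k _ => rFun_eq_star hm p₀ p₁ (x k),
      myProdDiv _ _ _ (fun k => ENNReal.ofReal_ne_top),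
      ← ENNReal.ofReal_prod_of_nonneg (fun k _ => hqsD.2.1 _),
      ← ENNReal.ofReal_prod_of_nonneg (fun k _ => hpsD.2.1 _)]
  have hE : ENNReal.log (ENNReal.ofReal (Real.exp c)) = (c : EReal) := by
    rw [ENNReal.log_ofReal, if_neg (not_le.2 (Real.exp_pos c)), Real.log_exp]
  -- pointwise Neyman–Pearson inequality
  have hpoint : ∀ x : Fin n → X,
      0 ≤ (φcen x - φ x) * ((∏ k, starDensity μ A p₁ (x k))
        - Real.exp c * ∏ k, starDensity μ A p₀ (x k)) := by
    intro x
    set Qx : ℝ := ∏ k, starDensity μ A p₁ (x k) with hQx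
    set Px : ℝ := ∏ k, starDensity μ A p₀ (x k) with hPx
    have hQ0 : 0 ≤ Qx := Finset.prod_nonneg fun k _ => hqsD.2.1 _
    have hP0 : 0 ≤ Px := Finset.prod_nonneg fun k _ => hpsD.2.1 _
    have hφx := hφ01 x
    have hval : φcen x = GFun c γ (ENNReal.ofReal Qx / ENNReal.ofReal Px) := by
      rw [hGval x, hRQP x]
    rcases lt_trichotomy ((c : EReal))
      (ENNReal.log (ENNReal.ofReal Qx / ENNReal.ofReal Px)) with hlt | heq | hgt
    · rw [hval]; unfold GFun; rw [if_pos hlt]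
      refine mul_nonneg (by linarith [hφx.2]) ?_
      rw [sub_nonneg]
      by_cases hP : Px = 0
      · rw [hP, mul_zero]; exact hQ0
      · have hPpos : 0 < Px := lt_of_le_of_ne hP0 (Ne.symm hP)
        have hOP0 : ENNReal.ofReal Px ≠ 0 := (ENNReal.ofReal_pos.2 hPpos).ne'
        rw [← hE] at hlt
        have hlt2 : ENNReal.ofReal (Real.exp c) < ENNReal.ofReal Qx / ENNReal.ofReal Px :=
          ENNReal.log_lt_log_iff.1 hlt
        have hlt3 := (ENNReal.lt_div_iff_mul_lt (Or.inl hOP0)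
          (Or.inl ENNReal.ofReal_ne_top)).1 hlt2
        rw [← ENNReal.ofReal_mul (Real.exp_pos c).le] at hlt3
        exact ((ENNReal.ofReal_lt_ofReal_iff_of_nonneg
          (mul_nonneg (Real.exp_pos c).le hP0)).1 hlt3).le
    · have hPpos : 0 < Px := by
        rcases eq_or_lt_of_le hP0 with h0 | h
        · exfalso
          by_cases hQz : Qx = 0
          · rw [hQz, ← h0] at heq
            simp only [ENNReal.ofReal_zero, ENNReal.zero_div, ENNReal.log_zero] at heq
            exact EReal.coe_ne_bot c heq
          · have hQpos : 0 < Qx := lt_of_le_of_ne hQ0 (Ne.symm hQz)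
            rw [← h0, ENNReal.ofReal_zero,
              ENNReal.div_zero (ENNReal.ofReal_pos.2 hQpos).ne', ENNReal.log_top] at heq
            exact EReal.coe_ne_top c heq
        · exact h
      have hOP0 : ENNReal.ofReal Px ≠ 0 := (ENNReal.ofReal_pos.2 hPpos).ne'
      have hratio : ENNReal.ofReal Qx / ENNReal.ofReal Px = ENNReal.ofReal (Real.exp c) :=
        ENNReal.log_injective (by rw [hE]; exact heq.symm)
      have hQP : Qx = Real.exp c * Px := by
        have h4 := (ENNReal.eq_div_iff hOP0 ENNReal.ofReal_ne_top).1 hratio.symm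
        rw [← ENNReal.ofReal_mul hP0] at h4
        have h5 := (ENNReal.ofReal_eq_ofReal_iff
          (mul_nonneg hP0 (Real.exp_pos c).le) hQ0).1 h4
        rw [← h5]; ring
      rw [hQP]; simp
    · rw [hval]; unfold GFun
      rw [if_neg (not_lt.2 hgt.le), if_neg hgt.ne]
      have h1 : Qx ≤ Real.exp c * Px := by
        by_cases hP : Px = 0
        · have hQz : Qx = 0 := by
            by_contra hQz
            have hQpos : 0 < Qx := lt_of_le_of_ne hQ0 (Ne.symm hQz)
            rw [hP, ENNReal.ofReal_zero,
              ENNReal.div_zero (ENNReal.ofReal_pos.2 hQpos).ne', ENNReal.log_top] at hgt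
            exact not_top_lt hgt
          rw [hP, hQz, mul_zero]
        · have hPpos : 0 < Px := lt_of_le_of_ne hP0 (Ne.symm hP)
          have hOP0 : ENNReal.ofReal Px ≠ 0 := (ENNReal.ofReal_pos.2 hPpos).ne'
          rw [← hE] at hgt
          have hlt2 : ENNReal.ofReal Qx / ENNReal.ofReal Px < ENNReal.ofReal (Real.exp c) :=
            ENNReal.log_lt_log_iff.1 hgt
          have hlt3 := (ENNReal.div_lt_iff (Or.inl hOP0)
            (Or.inl ENNReal.ofReal_ne_top)).1 hlt2
          rw [← ENNReal.ofReal_mul (Real.exp_pos c).le] at hlt3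
          exact ((ENNReal.ofReal_lt_ofReal_iff_of_nonneg hQ0).1 hlt3).le
      have hring : (0 - φ x) * (Qx - Real.exp c * Px)
          = φ x * (Real.exp c * Px - Qx) := by ring
      rw [hring]
      exact mul_nonneg hφx.1 (by linarith)
  -- integrability
  have hQint : Integrable (fun x : Fin n → X => ∏ k, starDensity μ A p₁ (x k))
      (Measure.pi fun _ : Fin n => μ) := by
    letI : MeasureSpace X := ⟨μ⟩
    haveI : SigmaFinite (volume : Measure X) := ‹SigmaFinite μ›
    exact Integrable.fintype_prod (f := fun _ : Fin n => starDensity μ A p₁)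
      fun _ => myDensityIntegrable hqsD
  have hPint : Integrable (fun x : Fin n → X => ∏ k, starDensity μ A p₀ (x k))
      (Measure.pi fun _ : Fin n => μ) := by
    letI : MeasureSpace X := ⟨μ⟩
    haveI : SigmaFinite (volume : Measure X) := ‹SigmaFinite μ›
    exact Integrable.fintype_prod (f := fun _ : Fin n => starDensity μ A p₀)
      fun _ => myDensityIntegrable hpsD
  have hbφ : ∃ C, ∀ x : Fin n → X, ‖φ x‖ ≤ C :=
    ⟨1, fun x => by rw [Real.norm_eq_abs, abs_of_nonneg (hφ01 x).1]; exact (hφ01 x).2⟩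
  have hbφcen : ∃ C, ∀ x : Fin n → X, ‖φcen x‖ ≤ C :=
    ⟨1, fun x => by rw [Real.norm_eq_abs, abs_of_nonneg (hφcen01 x).1]; exact (hφcen01 x).2⟩
  have hφQ := hQint.bdd_mul hφm.aestronglyMeasurable (Filter.Eventually.of_forall hbφ.choose_spec)
  have hφP := hPint.bdd_mul hφm.aestronglyMeasurable (Filter.Eventually.of_forall hbφ.choose_spec)
  have hφcenQ := hQint.bdd_mul hφcenm.aestronglyMeasurable (Filter.Eventually.of_forall hbφcen.choose_spec)
  have hφcenP := hPint.bdd_mul hφcenm.aestronglyMeasurable (Filter.Eventually.of_forall hbφcen.choose_spec)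
  -- size and level at the star null density
  have hsize' : ∫ x, φcen x * ∏ k, starDensity μ A p₀ (x k)
      ∂(Measure.pi fun _ : Fin n => μ) = α := hsize _ hpsD hpsae
  have hlevel' : ∫ x, φ x * ∏ k, starDensity μ A p₀ (x k)
      ∂(Measure.pi fun _ : Fin n => μ) ≤ α := hφlevel _ hpsD hpsae
  -- the Neyman–Pearson comparison at the star alternative
  have hNP : ∫ x, φ x * ∏ k, starDensity μ A p₁ (x k) ∂(Measure.pi fun _ : Fin n => μ)
      ≤ ∫ x, φcen x * ∏ k, starDensity μ A p₁ (x k) ∂(Measure.pi fun _ : Fin n => μ) := by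
    have h0 : 0 ≤ ∫ x, (φcen x - φ x) * ((∏ k, starDensity μ A p₁ (x k))
        - Real.exp c * ∏ k, starDensity μ A p₀ (x k))
        ∂(Measure.pi fun _ : Fin n => μ) := integral_nonneg hpoint
    have hexp : (fun x : Fin n → X => (φcen x - φ x) * ((∏ k, starDensity μ A p₁ (x k))
        - Real.exp c * ∏ k, starDensity μ A p₀ (x k)))
        = fun x => (φcen x * ∏ k, starDensity μ A p₁ (x k)
            - φ x * ∏ k, starDensity μ A p₁ (x k))
          - (Real.exp c * (φcen x * ∏ k, starDensity μ A p₀ (x k))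
            - Real.exp c * (φ x * ∏ k, starDensity μ A p₀ (x k))) :=
      funext fun x => by ring
    have hI : ∫ x, ((φcen x * ∏ k, starDensity μ A p₁ (x k)
            - φ x * ∏ k, starDensity μ A p₁ (x k))
          - (Real.exp c * (φcen x * ∏ k, starDensity μ A p₀ (x k))
            - Real.exp c * (φ x * ∏ k, starDensity μ A p₀ (x k))))
          ∂(Measure.pi fun _ : Fin n => μ)
        = ((∫ x, φcen x * ∏ k, starDensity μ A p₁ (x k) ∂(Measure.pi fun _ : Fin n => μ))
            - ∫ x, φ x * ∏ k, starDensity μ A p₁ (x k) ∂(Measure.pi fun _ : Fin n => μ))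
          - (Real.exp c * (∫ x, φcen x * ∏ k, starDensity μ A p₀ (x k)
                ∂(Measure.pi fun _ : Fin n => μ))
            - Real.exp c * ∫ x, φ x * ∏ k, starDensity μ A p₀ (x k)
                ∂(Measure.pi fun _ : Fin n => μ)) := by
      rw [integral_sub (f := fun x : Fin n → X => φcen x * ∏ k, starDensity μ A p₁ (x k)
            - φ x * ∏ k, starDensity μ A p₁ (x k))
          (g := fun x : Fin n → X => Real.exp c * (φcen x * ∏ k, starDensity μ A p₀ (x k))
            - Real.exp c * (φ x * ∏ k, starDensity μ A p₀ (x k)))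
          (hφcenQ.sub hφQ) ((hφcenP.const_mul _).sub (hφP.const_mul _))]
      congr 1
      · exact integral_sub hφcenQ hφQ
      · rw [integral_sub (hφcenP.const_mul _) (hφP.const_mul _), integral_const_mul,
          integral_const_mul]
    rw [hexp, hI, hsize'] at h0
    have hmul := mul_le_mul_of_nonneg_left hlevel' (Real.exp_pos c).le
    linarith
  -- probability measures induced by densities
  have hνprob : ∀ q : X → ℝ, IsDensity μ q →
      IsProbabilityMeasure (μ.withDensity fun y => ENNReal.ofReal (q y)) := by
    intro q hq
    constructor
    rw [withDensity_apply _ MeasurableSet.univ, Measure.restrict_univ,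
      ← ofReal_integral_eq_lintegral_ofReal (myDensityIntegrable hq)
        (Filter.Eventually.of_forall hq.2.1), hq.2.2, ENNReal.ofReal_one]
  -- invariance of the power of `φcen` over the composite alternative
  have hinv : ∀ q : X → ℝ, IsDensity μ q → (∀ᵐ x ∂μ, x ∈ A → q x = p₁ x) →
      ∫ x, φcen x * ∏ k, q (x k) ∂(Measure.pi fun _ : Fin n => μ)
        = ∫ x, φcen x * ∏ k, starDensity μ A p₁ (x k)
            ∂(Measure.pi fun _ : Fin n => μ) := by
    intro q hq hqA
    rw [myPowerEq μ q hq.1 hq.2.1 hq.2.2 φcen,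
      myPowerEq μ (starDensity μ A p₁) hqsD.1 hqsD.2.1 hqsD.2.2 φcen]
    haveI h1 := hνprob q hq
    haveI h2 := hνprob _ hqsD
    have hmapq : Measure.map (rFun μ A p₀ p₁) (μ.withDensity fun y => ENNReal.ofReal (q y))
        = Measure.map (rFun μ A p₀ p₁)
            (μ.withDensity fun y => ENNReal.ofReal (starDensity μ A p₁ y)) := by
      refine myMapInv hA hrm (cst := ENNReal.ofReal (1 - ∫ z in A, p₁ z ∂μ)
          / ENNReal.ofReal (1 - ∫ z in A, p₀ z ∂μ)) (fun y hy => if_neg hy) ?_ ?_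
      · exact hqA.mono fun y hy hyA => by rw [hy hyA, starDensity_on μ A p₁ hyA]
      · rw [myTail hA hq hqA, myTail hA hqsD hqsae]
    haveI h3 : IsProbabilityMeasure (Measure.map (rFun μ A p₀ p₁)
        (μ.withDensity fun y => ENNReal.ofReal (starDensity μ A p₁ y))) :=
      Measure.isProbabilityMeasure_map hrm.aemeasurable
    have hcomp : ∀ ν' : Measure X, IsProbabilityMeasure ν' →
        Measure.map (rFun μ A p₀ p₁) ν' = Measure.map (rFun μ A p₀ p₁)
          (μ.withDensity fun y => ENNReal.ofReal (starDensity μ A p₁ y)) →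
        ∫ x, φcen x ∂(Measure.pi fun _ : Fin n => ν')
          = ∫ u, GFun c γ (∏ k, u k) ∂(Measure.pi fun _ : Fin n =>
              Measure.map (rFun μ A p₀ p₁)
                (μ.withDensity fun y => ENNReal.ofReal (starDensity μ A p₁ y))) := by
      intro ν' hp' hmap'
      haveI := hp'
      have hmp : MeasurePreserving (fun (x : Fin n → X) (k : Fin n) => rFun μ A p₀ p₁ (x k))
          (Measure.pi fun _ => ν')
          (Measure.pi fun _ => Measure.map (rFun μ A p₀ p₁)
            (μ.withDensity fun y => ENNReal.ofReal (starDensity μ A p₁ y))) :=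
        measurePreserving_pi _ _ (fun _ => ⟨hrm, hmap'⟩)
      rw [show φcen = fun x => GFun c γ (∏ k, rFun μ A p₀ p₁ (x k)) from funext hGval,
        ← hmp.map_eq, integral_map hmp.measurable.aemeasurable hGprodm.aestronglyMeasurable]
    rw [hcomp _ h1 hmapq, hcomp _ h2 rfl]
  -- conclusion
  haveI hne : Nonempty {q : X → ℝ // IsDensity μ q ∧ ∀ᵐ x ∂μ, x ∈ A → q x = p₁ x} :=
    ⟨⟨starDensity μ A p₁, hqsD, hqsae⟩⟩
  have hBdd : BddBelow (Set.range fun q : {q : X → ℝ // IsDensity μ q ∧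
      ∀ᵐ x ∂μ, x ∈ A → q x = p₁ x} =>
      ∫ x, φ x * ∏ k, (q : X → ℝ) (x k) ∂(Measure.pi fun _ : Fin n => μ)) := by
    refine ⟨0, ?_⟩
    rintro v ⟨q, rfl⟩
    exact integral_nonneg fun x => mul_nonneg (hφ01 x).1
      (Finset.prod_nonneg fun k _ => q.2.1.2.1 _)
  calc minimalPower μ A p₁ n φ
      ≤ ∫ x, φ x * ∏ k, starDensity μ A p₁ (x k) ∂(Measure.pi fun _ : Fin n => μ) := by
        exact ciInf_le hBdd ⟨starDensity μ A p₁, hqsD, hqsae⟩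
    _ ≤ ∫ x, φcen x * ∏ k, starDensity μ A p₁ (x k) ∂(Measure.pi fun _ : Fin n => μ) := hNP
    _ ≤ minimalPower μ A p₁ n φcen := by
        exact le_ciInf fun q => (hinv q.1 q.2.1 q.2.2).ge

end
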